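/- Let I be a dyadic cube in ℝ^d and let ω(I) denote the unique dyadic child of I whose closure contains the center of the parent cube of I. If I is a dyadic cube of side length 2^{-N} and J is a dyadic cube of side length 2^{-ℓ} with ℓ > N whose closure meets the boundary ∂I, then for all x ∈ ω(J) one has 2^{-ℓ-1} ≤ dist_∞(x, ∂I) ≤ 2^{-ℓ}, where dist_∞ is the distance in the sup-norm. -/
import Mathlib


open MeasureTheory Set Metric

noncomputable section

/-- The dyadic cube of generation `ℓ` (side length `2^(-ℓ)`) with index `ν ∈ ℤ^d`. -/
def dyadicCube (d ℓ : ℕ) (ν : Fin d → ℤ) : Set (Fin d → ℝ) :=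
  Set.pi Set.univ fun i =>
    Set.Ico ((ν i : ℝ) * (2:ℝ) ^ (-(ℓ:ℤ))) (((ν i : ℝ) + 1) * (2:ℝ) ^ (-(ℓ:ℤ)))

/-- The index of the child `ω(J)` of the dyadic cube `J` of generation `ℓ` with index `ν`:
the unique child whose closure contains the center of the parent cube of `J`. -/
def omegaIdx (d : ℕ) (ν : Fin d → ℤ) : Fin d → ℤ :=
  fun i => 2 * ν i + (if Even (ν i) then 1 else 0)

/-- The cube `ω(J)` for `J` the dyadic cube of generation `ℓ` and index `ν`. -/
def omegaCube (d ℓ : ℕ) (ν : Fin d → ℤ) : Set (Fin d → ℝ) :=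
  dyadicCube d (ℓ + 1) (omegaIdx d ν)

lemma closure_dyadicCube (d ℓ : ℕ) (ν : Fin d → ℤ) :
    closure (dyadicCube d ℓ ν) = Set.pi Set.univ fun i =>
      Set.Icc ((ν i : ℝ) * (2:ℝ) ^ (-(ℓ:ℤ))) (((ν i : ℝ) + 1) * (2:ℝ) ^ (-(ℓ:ℤ))) := by
  rw [dyadicCube, closure_pi_set]
  refine Set.pi_congr rfl fun i _ => ?_
  have h2 : (0:ℝ) < (2:ℝ) ^ (-(ℓ:ℤ)) := by positivity
  have hne : (ν i : ℝ) * (2:ℝ) ^ (-(ℓ:ℤ)) ≠ ((ν i : ℝ) + 1) * (2:ℝ) ^ (-(ℓ:ℤ)) :=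
    ne_of_lt (by nlinarith)
  exact closure_Ico hne

lemma interior_dyadicCube (d ℓ : ℕ) (ν : Fin d → ℤ) :
    interior (dyadicCube d ℓ ν) = Set.pi Set.univ fun i =>
      Set.Ioo ((ν i : ℝ) * (2:ℝ) ^ (-(ℓ:ℤ))) (((ν i : ℝ) + 1) * (2:ℝ) ^ (-(ℓ:ℤ))) := by
  rw [dyadicCube, interior_pi_set finite_univ]
  simp [interior_Ico]

lemma frontier_dyadicCube (d ℓ : ℕ) (ν : Fin d → ℤ) :
    frontier (dyadicCube d ℓ ν) =
      (Set.pi Set.univ fun i =>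
        Set.Icc ((ν i : ℝ) * (2:ℝ) ^ (-(ℓ:ℤ))) (((ν i : ℝ) + 1) * (2:ℝ) ^ (-(ℓ:ℤ)))) \
      (Set.pi Set.univ fun i =>
        Set.Ioo ((ν i : ℝ) * (2:ℝ) ^ (-(ℓ:ℤ))) (((ν i : ℝ) + 1) * (2:ℝ) ^ (-(ℓ:ℤ)))) := by
  rw [frontier, closure_dyadicCube, interior_dyadicCube]

lemma key_dist (w k : ℤ) (hw : w % 4 = 1 ∨ w % 4 = 2) (h x : ℝ) (hpos : 0 < h)
    (h1 : (w:ℝ) * h ≤ x) (h2 : x ≤ ((w:ℝ)+1) * h) : h ≤ |x - ((4*k : ℤ):ℝ) * h| := by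
  have hk : 4*k ≤ w - 1 ∨ w + 2 ≤ 4*k := by omega
  rcases hk with hk | hk
  · have hk' : ((4*k:ℤ):ℝ) ≤ (w:ℝ) - 1 := by exact_mod_cast hk
    have hle : h ≤ x - ((4*k:ℤ):ℝ) * h := by nlinarith
    exact hle.trans (le_abs_self _)
  · have hk' : (w:ℝ) + 2 ≤ ((4*k:ℤ):ℝ) := by exact_mod_cast hk
    have hle : h ≤ -(x - ((4*k:ℤ):ℝ) * h) := by nlinarith
    exact hle.trans (neg_le_abs _)

lemma omegaIdx_mod (n : ℤ) :
    ((2*n + if Even n then 1 else 0) % 4 = 1) ∨ ((2*n + if Even n then 1 else 0) % 4 = 2) := by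
  rcases Int.even_or_odd n with he | ho
  · rw [if_pos he]
    obtain ⟨q, hq⟩ := he
    left; omega
  · rw [if_neg (Int.not_even_iff_odd.mpr ho)]
    obtain ⟨q, hq⟩ := ho
    right; omega

/-- If `I` is a dyadic cube of side length `2^(-N)` and `J` a dyadic cube of side length
`2^(-ℓ)` with `ℓ > N` whose closure meets `∂I`, then all `x ∈ ω(J)` satisfy
`2^(-ℓ-1) ≤ dist_∞(x, ∂I) ≤ 2^(-ℓ)`. (The metric on `Fin d → ℝ` is the sup-metric.) -/
theorem stmt0 (d N ℓ : ℕ) (hd : 0 < d) (hℓ : N < ℓ) (μ ν : Fin d → ℤ)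
    (hmeet : (closure (dyadicCube d ℓ ν) ∩ frontier (dyadicCube d N μ)).Nonempty) :
    ∀ x ∈ omegaCube d ℓ ν,
      (2:ℝ) ^ (-(ℓ:ℤ) - 1) ≤ Metric.infDist x (frontier (dyadicCube d N μ)) ∧
      Metric.infDist x (frontier (dyadicCube d N μ)) ≤ (2:ℝ) ^ (-(ℓ:ℤ)) := by
  intro x hx
  set u : ℝ := (2:ℝ) ^ (-(ℓ:ℤ) - 1) with hu
  have hupos : (0:ℝ) < u := by positivity
  have htu : (2:ℝ) ^ (-(ℓ:ℤ)) = 2 * u := by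
    rw [hu, show -(ℓ:ℤ) - 1 = -(ℓ:ℤ) + (-1) from by ring,
      zpow_add₀ (by norm_num : (2:ℝ) ≠ 0)]
    norm_num
    ring
  -- face values of I as multiples of 4u
  have hsu : (2:ℝ) ^ (-(N:ℤ)) = ((4 * 2^(ℓ-1-N) : ℤ):ℝ) * u := by
    have e1 : (2:ℝ) ^ (-(N:ℤ)) = (2:ℝ) ^ ((ℓ+1-N : ℕ):ℤ) * (2:ℝ) ^ (-(ℓ:ℤ) - 1) := by
      rw [← zpow_add₀ (by norm_num : (2:ℝ) ≠ 0)]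
      congr 1
      omega
    rw [e1, zpow_natCast, show ℓ+1-N = (ℓ-1-N)+2 from by omega, pow_add, hu]
    push_cast
    ring
  -- coordinates of x in ω(J)
  have hx' : ∀ i, (omegaIdx d ν i : ℝ) * u ≤ x i ∧ x i ≤ ((omegaIdx d ν i : ℝ) + 1) * u := by
    intro i
    have hxi := hx i (mem_univ i)
    simp only [mem_Ico] at hxi
    have hexp : (2:ℝ) ^ (-((ℓ+1 : ℕ):ℤ)) = u := by
      rw [hu]; congr 1; push_cast; ring
    rw [hexp] at hxi
    exact ⟨hxi.1, hxi.2.le⟩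
  -- integer bounds on omegaIdx
  have hwb : ∀ i, 2 * ν i ≤ omegaIdx d ν i ∧ omegaIdx d ν i ≤ 2 * ν i + 1 := by
    intro i
    unfold omegaIdx
    split <;> omega
  -- x lies in closure of J
  have hxJ : ∀ i, (ν i : ℝ) * (2*u) ≤ x i ∧ x i ≤ ((ν i : ℝ) + 1) * (2*u) := by
    intro i
    obtain ⟨h1, h2⟩ := hx' i
    obtain ⟨e1, e2⟩ := hwb i
    have e1' : ((2 * ν i : ℤ):ℝ) ≤ (omegaIdx d ν i : ℝ) := by exact_mod_cast e1
    have e2' : (omegaIdx d ν i : ℝ) ≤ ((2 * ν i + 1 : ℤ):ℝ) := by exact_mod_cast e2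
    push_cast at e1' e2'
    constructor
    · nlinarith
    · nlinarith
  obtain ⟨p, hpJ, hpF⟩ := hmeet
  rw [closure_dyadicCube] at hpJ
  constructor
  · -- lower bound
    by_contra hcon
    push_neg at hcon
    rw [infDist_lt_iff ⟨p, hpF⟩] at hcon
    obtain ⟨y, hyF, hdy⟩ := hcon
    rw [frontier_dyadicCube] at hyF
    obtain ⟨hyIcc, hyIoo⟩ := hyF
    rw [Set.mem_pi] at hyIoo
    push_neg at hyIoo
    obtain ⟨i0, -, hi0⟩ := hyIoo
    have hyb := hyIcc i0 (mem_univ i0)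
    simp only [mem_Icc] at hyb
    simp only [mem_Ioo, not_and_or, not_lt] at hi0
    have hface : ∀ m : ℤ, y i0 = (m:ℝ) * (2:ℝ) ^ (-(N:ℤ)) → False := by
      intro m hm
      have hkey := key_dist (omegaIdx d ν i0) (m * 2^(ℓ-1-N)) (omegaIdx_mod (ν i0)) u (x i0)
        hupos (hx' i0).1 (hx' i0).2
      have hval : y i0 = ((4 * (m * 2^(ℓ-1-N)) : ℤ):ℝ) * u := by
        rw [hm, hsu]
        push_cast
        ring
      have h1 : u ≤ |x i0 - y i0| := by rw [hval]; exact hkey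
      have h2 : |x i0 - y i0| ≤ dist x y := by
        rw [← Real.dist_eq]
        exact dist_le_pi_dist x y i0
      linarith
    rcases hi0 with h | h
    · have : y i0 = (μ i0 : ℝ) * (2:ℝ) ^ (-(N:ℤ)) := le_antisymm h hyb.1
      exact hface (μ i0) this
    · have : y i0 = ((μ i0 + 1 : ℤ):ℝ) * (2:ℝ) ^ (-(N:ℤ)) := by
        push_cast
        exact le_antisymm hyb.2 h
      exact hface (μ i0 + 1) this
  · -- upper bound
    refine le_trans (Metric.infDist_le_dist_of_mem hpF) ?_
    rw [htu, dist_pi_le_iff (by linarith)]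
    intro i
    rw [Real.dist_eq]
    have hpi := hpJ i (mem_univ i)
    simp only [mem_Icc, htu] at hpi
    obtain ⟨hx1, hx2⟩ := hxJ i
    rw [abs_sub_le_iff]
    constructor <;> linarith [hpi.1, hpi.2]

end
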